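/- For any element w of a finite real reflection group W acting on an ℓ-dimensional Euclidean space V, the reflection length l_T(w) equals ℓ − dim F(w), where F(w) is the fixed subspace of w. -/

import Mathlib

open scoped RealInnerProductSpace
open Module

noncomputable section

variable {V : Type*} [NormedAddCommGroup V] [InnerProductSpace ℝ V]

/-- `g` acts as the orthogonal reflection in the hyperplane orthogonal to `α`. -/
def reflFormula (α : V) (g : V ≃ₗᵢ[ℝ] V) : Prop :=
  ∀ v, g v = v - (2 * ⟪α, v⟫ / ⟪α, α⟫) • α

/-- `g` is an orthogonal reflection. -/
def IsReflection (g : V ≃ₗᵢ[ℝ] V) : Prop :=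
  ∃ α : V, α ≠ 0 ∧ reflFormula α g

/-- A finite real reflection group: a finite subgroup of the orthogonal group
generated by its reflections. -/
def IsReflectionGroup (W : Subgroup (V ≃ₗᵢ[ℝ] V)) : Prop :=
  Finite W ∧ Subgroup.closure {g | g ∈ W ∧ IsReflection g} = W

/-- Reflection length: the least `k` such that `w` is a product of `k` reflections. -/
def refLen (W : Subgroup (V ≃ₗᵢ[ℝ] V)) (w : W) : ℕ :=
  sInf {k | ∃ l : List W, l.length = k ∧ (∀ t ∈ l, IsReflection (t : W).1) ∧ l.prod = w}

/-- The absolute order on `W`. -/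
def absLe (W : Subgroup (V ≃ₗᵢ[ℝ] V)) (u v : W) : Prop :=
  refLen W u + refLen W (u⁻¹ * v) = refLen W v

/-- Covering relation of the absolute order. -/
def covers (W : Subgroup (V ≃ₗᵢ[ℝ] V)) (u v : W) : Prop :=
  absLe W u v ∧ u ≠ v ∧ ∀ z, absLe W u z → absLe W z v → z = u ∨ z = v

/-- The fixed subspace of an isometry. -/
def fixedSpace (g : V ≃ₗᵢ[ℝ] V) : Submodule ℝ V where
  carrier := {v | g v = v}
  add_mem' := by
    intro a b ha hb
    simp only [Set.mem_setOf_eq, map_add] at *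
    rw [ha, hb]
  zero_mem' := by simp
  smul_mem' := by
    intro c a ha
    simp only [Set.mem_setOf_eq, map_smul] at *
    rw [ha]

/-- A root system for the reflection group `W`. -/
def IsRootSystemFor (W : Subgroup (V ≃ₗᵢ[ℝ] V)) (Φ : Set V) : Prop :=
  Φ.Finite ∧ (∀ α ∈ Φ, α ≠ 0) ∧ (∀ α ∈ Φ, -α ∈ Φ) ∧
  (∀ α ∈ Φ, ∀ c : ℝ, c • α ∈ Φ → c = 1 ∨ c = -1) ∧
  (∀ α ∈ Φ, ∃ t ∈ W, reflFormula α t) ∧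
  (∀ t ∈ W, IsReflection t → ∃ α ∈ Φ, reflFormula α t) ∧
  (∀ g ∈ W, ∀ α ∈ Φ, g α ∈ Φ)

/-- A simple system for `Φ`: roots `σ 1, …, σ ℓ` which are linearly independent and
such that every root is a nonnegative or nonpositive combination of them. -/
def IsSimpleSystem (Φ : Set V) {ℓ : ℕ} (σ : Fin ℓ → V) : Prop :=
  (∀ i, σ i ∈ Φ) ∧ LinearIndependent ℝ σ ∧
  ∀ α ∈ Φ, (∃ c : Fin ℓ → ℝ, (∀ i, 0 ≤ c i) ∧ α = ∑ i, c i • σ i) ∨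
           (∃ c : Fin ℓ → ℝ, (∀ i, 0 ≤ c i) ∧ -α = ∑ i, c i • σ i)

/-- `γ` is a Coxeter element of `W`: a product, in some order, of the reflections in
the `ℓ` simple roots of some simple system of the root system `Φ`. -/
def IsCoxeterElement (W : Subgroup (V ≃ₗᵢ[ℝ] V)) (Φ : Set V) (ℓ : ℕ) (γ : W) : Prop :=
  ∃ σ : Fin ℓ → V, IsSimpleSystem Φ σ ∧
    ∃ t : Fin ℓ → W, (∀ i, reflFormula (σ i) (t i).1) ∧
      ∃ l : List (Fin ℓ), l.Nodup ∧ (∀ i, i ∈ l) ∧ (l.map t).prod = γ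

/-- `l` is a maximal (saturated) chain from `u` to `v` in the absolute order. -/
def IsMaximalChain (W : Subgroup (V ≃ₗᵢ[ℝ] V)) (u v : W) (l : List W) : Prop :=
  l.head? = some u ∧ l.getLast? = some v ∧ l.Chain' (covers W)

/-- The label of a chain under the natural edge labeling `λ (x, y) = x⁻¹ * y`. -/
def chainLabels (W : Subgroup (V ≃ₗᵢ[ℝ] V)) (l : List W) : List W :=
  l.zipWith (fun x y => x⁻¹ * y) l.tail

end

namespace RefLenAux

variable {V : Type*} [NormedAddCommGroup V] [InnerProductSpace ℝ V]

lemma mul_apply (f g : V ≃ₗᵢ[ℝ] V) (v : V) : (f * g) v = f (g v) := rfl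

lemma one_apply (v : V) : (1 : V ≃ₗᵢ[ℝ] V) v = v := rfl

lemma mem_fixedSpace {g : V ≃ₗᵢ[ℝ] V} {v : V} : v ∈ fixedSpace g ↔ g v = v := Iff.rfl

lemma inner_self_unit {α : V} (h : ‖α‖ = 1) : ⟪α, α⟫ = 1 := by
  rw [real_inner_self_eq_norm_mul_norm, h]; norm_num

variable {α β : V} {t t' g : V ≃ₗᵢ[ℝ] V}

lemma refl_apply_self (hα : α ≠ 0) (ht : reflFormula α t) : t α = -α := by
  have h0 : ⟪α, α⟫ ≠ 0 := by
    simpa using hα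
  rw [ht α, mul_div_assoc, div_self h0, mul_one, two_smul]
  abel

lemma refl_inner_apply (hα : α ≠ 0) (ht : reflFormula α t) (v : V) :
    ⟪α, t v⟫ = -⟪α, v⟫ := by
  have h0 : ⟪α, α⟫ ≠ 0 := by simpa using hα
  rw [ht v, inner_sub_right, real_inner_smul_right]
  field_simp
  ring

lemma refl_sq (hα : α ≠ 0) (ht : reflFormula α t) : t * t = 1 := by
  ext v
  rw [mul_apply, one_apply, ht (t v), refl_inner_apply hα ht v, ht v]
  have : 2 * -⟪α, v⟫ / ⟪α, α⟫ = -(2 * ⟪α, v⟫ / ⟪α, α⟫) := by ring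
  rw [this, neg_smul]
  abel

lemma refl_inv (hα : α ≠ 0) (ht : reflFormula α t) : t⁻¹ = t :=
  inv_eq_of_mul_eq_one_left (refl_sq hα ht)

lemma refl_unique (h1 : reflFormula α t) (h2 : reflFormula α t') : t = t' := by
  ext v; rw [h1 v, h2 v]

lemma refl_conj (ht : reflFormula α t) (g : V ≃ₗᵢ[ℝ] V) :
    reflFormula (g α) (g * t * g⁻¹) := by
  intro v
  have h1 : ⟪g α, v⟫ = ⟪α, g⁻¹ v⟫ := by
    conv_lhs => rw [show v = g (g⁻¹ v) from (g.apply_symm_apply v).symm]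
    exact g.inner_map_map α (g⁻¹ v)
  have h2 : ⟪g α, g α⟫ = ⟪α, α⟫ := g.inner_map_map α α
  rw [mul_apply, mul_apply, ht (g⁻¹ v), map_sub, map_smul, h1, h2]
  congr 1
  exact g.apply_symm_apply v

lemma refl_neg (ht : reflFormula α t) : reflFormula (-α) t := by
  intro v
  have h1 : 2 * ⟪-α, v⟫ / ⟪-α, -α⟫ = -(2 * ⟪α, v⟫ / ⟪α, α⟫) := by
    rw [inner_neg_left, inner_neg_neg]; ring
  rw [ht v, h1, neg_smul, smul_neg, neg_neg]

lemma refl_smul (hc : (c : ℝ) ≠ 0) (hα : α ≠ 0) (ht : reflFormula α t) :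
    reflFormula (c • α) t := by
  intro v
  have h0 : ⟪α, α⟫ ≠ 0 := by simpa using hα
  have h1 : (2 * ⟪c • α, v⟫ / ⟪c • α, c • α⟫) • (c • α) = (2 * ⟪α, v⟫ / ⟪α, α⟫) • α := by
    rw [real_inner_smul_left, real_inner_smul_left, real_inner_smul_right, smul_smul]
    congr 1
    field_simp
  rw [ht v, ← h1]

lemma refl_fixed (hα : α ≠ 0) (ht : reflFormula α t) :
    fixedSpace t = (ℝ ∙ α)ᗮ := by
  have h0 : ⟪α, α⟫ ≠ 0 := by simpa using hα
  ext v
  rw [mem_fixedSpace, Submodule.mem_orthogonal_singleton_iff_inner_right, ht v,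
    sub_eq_self, smul_eq_zero]
  constructor
  · rintro (h | h)
    · rcases div_eq_zero_iff.mp h with h' | h'
      · linarith [mul_eq_zero.mp h' |>.resolve_left (by norm_num : (2:ℝ) ≠ 0)]
      · exact absurd h' h0
    · exact absurd h hα
  · intro h; left; rw [h, mul_zero, zero_div]

lemma refl_finrank_fixed [FiniteDimensional ℝ V] (hα : α ≠ 0) (ht : reflFormula α t) :
    finrank ℝ (fixedSpace t) + 1 = finrank ℝ V := by
  rw [refl_fixed hα ht]
  have := Submodule.finrank_add_finrank_orthogonal (K := (ℝ ∙ α))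
  rw [finrank_span_singleton hα] at this
  omega

lemma fixedSpace_one : fixedSpace (1 : V ≃ₗᵢ[ℝ] V) = ⊤ := by
  ext v; simp [mem_fixedSpace, one_apply]

lemma fixed_inf_le (g h : V ≃ₗᵢ[ℝ] V) :
    fixedSpace g ⊓ fixedSpace h ≤ fixedSpace (g * h) := by
  intro v hv
  rcases Submodule.mem_inf.mp hv with ⟨h1, h2⟩
  rw [mem_fixedSpace] at *
  rw [mul_apply, h2, h1]

lemma lower_bound [FiniteDimensional ℝ V] (l : List (V ≃ₗᵢ[ℝ] V))
    (hl : ∀ t ∈ l, IsReflection t) :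
    finrank ℝ V ≤ finrank ℝ (fixedSpace l.prod) + l.length := by
  induction l with
  | nil => rw [List.prod_nil, fixedSpace_one]; simp [finrank_top]
  | cons t l ih =>
    obtain ⟨α, hα, ht⟩ := hl t List.mem_cons_self
    have h1 := refl_finrank_fixed hα ht
    have h2 : fixedSpace t ⊓ fixedSpace l.prod ≤ fixedSpace ((t :: l).prod) := by
      rw [List.prod_cons]; exact fixed_inf_le t l.prod
    have h3 := Submodule.finrank_sup_add_finrank_inf_eq (fixedSpace t) (fixedSpace l.prod)
    have h4 : finrank ℝ ((fixedSpace t) ⊔ (fixedSpace l.prod) : Submodule ℝ V) ≤ finrank ℝ V :=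
      Submodule.finrank_le _
    have h5 : finrank ℝ (fixedSpace t ⊓ fixedSpace l.prod : Submodule ℝ V)
        ≤ finrank ℝ (fixedSpace ((t :: l).prod)) := Submodule.finrank_mono h2
    have h6 := ih (fun t ht => hl t (List.mem_cons_of_mem _ ht))
    simp only [List.length_cons]
    omega

/-- The linear map `v ↦ g v - v`. -/
def oneSub (g : V ≃ₗᵢ[ℝ] V) : V →ₗ[ℝ] V :=
  (g.toLinearEquiv : V →ₗ[ℝ] V) - LinearMap.id

@[simp] lemma oneSub_apply (g : V ≃ₗᵢ[ℝ] V) (v : V) : oneSub g v = g v - v := rfl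

lemma ker_oneSub (g : V ≃ₗᵢ[ℝ] V) : LinearMap.ker (oneSub g) = fixedSpace g := by
  ext v
  rw [LinearMap.mem_ker, oneSub_apply, sub_eq_zero, mem_fixedSpace]

lemma range_oneSub_le (g : V ≃ₗᵢ[ℝ] V) :
    LinearMap.range (oneSub g) ≤ (fixedSpace g)ᗮ := by
  rintro _ ⟨v, rfl⟩
  rw [Submodule.mem_orthogonal]
  intro u hu
  rw [mem_fixedSpace] at hu
  rw [oneSub_apply, inner_sub_right]
  nth_rewrite 1 [← hu]
  rw [g.inner_map_map]
  ring

lemma range_oneSub [FiniteDimensional ℝ V] (g : V ≃ₗᵢ[ℝ] V) :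
    LinearMap.range (oneSub g) = (fixedSpace g)ᗮ := by
  refine Submodule.eq_of_le_of_finrank_le (range_oneSub_le g) ?_
  have h1 := LinearMap.finrank_range_add_finrank_ker (oneSub g)
  rw [ker_oneSub] at h1
  have h2 := Submodule.finrank_add_finrank_orthogonal (K := fixedSpace g)
  omega

lemma step_lemma [FiniteDimensional ℝ V] (hα : α ≠ 0) (ht : reflFormula α t)
    (g : V ≃ₗᵢ[ℝ] V) (hmem : α ∈ LinearMap.range (oneSub g)) :
    finrank ℝ (fixedSpace g) < finrank ℝ (fixedSpace (t * g)) := by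
  have h0 : ⟪α, α⟫ ≠ 0 := by simpa using hα
  obtain ⟨v0, hv0⟩ := hmem
  rw [oneSub_apply] at hv0
  have hgv0 : g v0 = v0 + α := by rw [← hv0]; abel
  have hnorm : 2 * ⟪v0, α⟫ + ⟪α, α⟫ = 0 := by
    have hn : ‖g v0‖ = ‖v0‖ := g.norm_map v0
    rw [hgv0] at hn
    have h1 : ‖v0 + α‖ ^ 2 = ‖v0‖ ^ 2 + 2 * ⟪v0, α⟫ + ‖α‖ ^ 2 := norm_add_sq_real v0 α
    rw [hn] at h1
    have h2 : ⟪α, α⟫ = ‖α‖ ^ 2 := real_inner_self_eq_norm_sq α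
    linarith
  have h1 : (t * g) v0 = v0 := by
    rw [mul_apply, hgv0, ht (v0 + α)]
    have h2 : ⟪α, v0 + α⟫ = ⟪α, α⟫ / 2 := by
      have hc : ⟪v0, α⟫ = ⟪α, v0⟫ := real_inner_comm α v0
      rw [inner_add_right]
      linarith
    rw [h2]
    have h3 : 2 * (⟪α, α⟫ / 2) / ⟪α, α⟫ = 1 := by field_simp
    rw [h3, one_smul]
    abel
  have hmem' : α ∈ LinearMap.range (oneSub g) := ⟨v0, by rw [oneSub_apply, hv0]⟩
  have h2 : fixedSpace g ≤ fixedSpace (t * g) := by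
    intro u hu
    have horthm := range_oneSub_le g hmem'
    rw [Submodule.mem_orthogonal] at horthm
    have horth : ⟪α, u⟫ = 0 := by
      rw [real_inner_comm]; exact horthm u hu
    rw [mem_fixedSpace, mul_apply, mem_fixedSpace.mp hu, ht u, horth, mul_zero, zero_div,
      zero_smul, sub_zero]
  have h3 : v0 ∉ fixedSpace g := by
    intro hmem3
    rw [mem_fixedSpace] at hmem3
    rw [hmem3] at hv0
    simp at hv0
    exact hα hv0.symm
  have hlt : fixedSpace g < fixedSpace (t * g) :=
    SetLike.lt_iff_le_and_exists.mpr ⟨h2, v0, mem_fixedSpace.mpr h1, h3⟩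
  exact Submodule.finrank_lt_finrank_of_lt hlt

section Avoid
variable {M : Type*} [AddCommGroup M] [Module ℝ M]

lemma avoid_subspaces {ι : Type*} (s : Finset ι) (p : ι → Submodule ℝ M)
    (h : ∀ i ∈ s, p i ≠ ⊤) : ∃ x : M, ∀ i ∈ s, x ∉ p i := by
  classical
  induction s using Finset.induction_on with
  | empty => exact ⟨0, by simp⟩
  | @insert a s ha ih =>
    obtain ⟨x0, hx0⟩ := ih (fun i hi => h i (Finset.mem_insert_of_mem hi))
    by_cases hxa : x0 ∉ p a
    · exact ⟨x0, fun i hi => by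
        rcases Finset.mem_insert.mp hi with rfl | hi
        · exact hxa
        · exact hx0 i hi⟩
    push_neg at hxa
    have hpa : p a ≠ ⊤ := h a (Finset.mem_insert_self a s)
    obtain ⟨y, hy⟩ : ∃ y, y ∉ p a := by
      by_contra hcon
      push_neg at hcon
      exact hpa (Submodule.eq_top_iff'.mpr hcon)
    -- for each i ∈ s, the set of scalars c with x0 + c • y ∈ p i is subsingleton
    have hsub : ∀ i ∈ s, ∀ c c' : ℝ, x0 + c • y ∈ p i → x0 + c' • y ∈ p i → c = c' := by
      intro i hi c c' hc hc'
      by_contra hne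
      have h1 : (c - c') • y ∈ p i := by
        have := (p i).sub_mem hc hc'
        simpa [sub_smul] using this
      have h2 : y ∈ p i := by
        have := (p i).smul_mem (c - c')⁻¹ h1
        rwa [smul_smul, inv_mul_cancel₀ (sub_ne_zero.mpr hne), one_smul] at this
      have h3 : x0 ∈ p i := by
        have := (p i).sub_mem hc ((p i).smul_mem c h2)
        simpa using this
      exact hx0 i hi h3
    -- bad scalars form a finite set
    have hbadfin : (⋃ i ∈ s, {c : ℝ | x0 + c • y ∈ p i}).Finite := by
      refine Set.Finite.biUnion s.finite_toSet (fun i hi => ?_)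
      refine Set.Subsingleton.finite (fun c hc c' hc' => hsub i hi c c' hc hc')
    obtain ⟨c, hc⟩ := Infinite.exists_notMem_finset (insert (0:ℝ) hbadfin.toFinset)
    refine ⟨x0 + c • y, fun i hi => ?_⟩
    rcases Finset.mem_insert.mp hi with rfl | hi
    · intro hmem
      have hcy : c • y ∈ p i := by
        have := (p i).sub_mem hmem hxa
        simpa using this
      have hc0 : c ≠ 0 := fun h0 => hc (by simp [h0])
      have : y ∈ p i := by
        have := (p i).smul_mem c⁻¹ hcy
        rwa [smul_smul, inv_mul_cancel₀ hc0, one_smul] at this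
      exact hy this
    · intro hmem
      apply hc
      rw [Finset.mem_insert]
      right
      rw [Set.Finite.mem_toFinset]
      exact Set.mem_biUnion hi hmem

end Avoid

namespace LemB

open scoped Classical

variable {W : Subgroup (V ≃ₗᵢ[ℝ] V)} {P Δ : Finset V} {x : V} {α β δ : V}

structure Data (W : Subgroup (V ≃ₗᵢ[ℝ] V)) (P : Finset V) (x : V) : Prop where
  unit : ∀ α ∈ P, ‖α‖ = 1
  posx : ∀ α ∈ P, 0 < ⟪α, x⟫
  refl_mem : ∀ α ∈ P, ∃ t, t ∈ W ∧ reflFormula α t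
  total : ∀ α : V, ‖α‖ = 1 → ∀ t, t ∈ W → reflFormula α t → (α ∈ P ∨ -α ∈ P)

def Cone (P S : Finset V) (β : V) : Prop :=
  ∃ c : V → ℝ, (∀ γ, 0 ≤ c γ) ∧ (∀ γ, γ ∉ S → c γ = 0) ∧ β = ∑ γ ∈ P, c γ • γ

lemma Data.nz (d : Data W P x) (hα : α ∈ P) : α ≠ 0 := by
  intro h
  have := d.unit α hα
  rw [h] at this
  simp at this

lemma Data.closed (d : Data W P x) {g : V ≃ₗᵢ[ℝ] V} (hg : g ∈ W) (hα : α ∈ P) :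
    g α ∈ P ∨ -(g α) ∈ P := by
  obtain ⟨t, htW, ht⟩ := d.refl_mem α hα
  have h1 : reflFormula (g α) (g * t * g⁻¹) := refl_conj ht g
  have h2 : g * t * g⁻¹ ∈ W := mul_mem (mul_mem hg htW) (inv_mem hg)
  have h3 : ‖g α‖ = 1 := by rw [g.norm_map]; exact d.unit α hα
  exact d.total (g α) h3 _ h2 h1

lemma sum_single (P : Finset V) (hα : α ∈ P) (r : ℝ) :
    ∑ γ ∈ P, (if γ = α then r else 0) • γ = r • α := by
  rw [Finset.sum_eq_single_of_mem α hα (fun b _ hb => by simp [hb])]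
  simp

lemma sum_split (P : Finset V) (hα : α ∈ P) (c : V → ℝ) :
    ∑ γ ∈ P, c γ • γ = c α • α + ∑ γ ∈ P, (if γ = α then 0 else c γ) • γ := by
  rw [← sum_single P hα (c α), ← Finset.sum_add_distrib]
  refine Finset.sum_congr rfl (fun γ _ => ?_)
  by_cases h : γ = α
  · subst h; simp
  · simp [h]

lemma sum_mul_smul (P : Finset V) (r : ℝ) (e : V → ℝ) :
    ∑ γ ∈ P, (r * e γ) • γ = r • ∑ γ ∈ P, e γ • γ := by
  rw [Finset.smul_sum]
  exact Finset.sum_congr rfl (fun γ _ => (smul_smul r (e γ) γ).symm)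

lemma L0 (d : Data W P x) (e : V → ℝ) (he : ∀ γ ∈ P, 0 ≤ e γ)
    (hsum : ∑ γ ∈ P, e γ • γ = 0) : ∀ γ ∈ P, e γ = 0 := by
  have h1 : ∑ γ ∈ P, e γ * ⟪γ, x⟫ = 0 := by
    have h := congrArg (fun v : V => ⟪v, x⟫) hsum
    simpa [sum_inner, real_inner_smul_left] using h
  have h2 : ∀ γ ∈ P, e γ * ⟪γ, x⟫ = 0 :=
    (Finset.sum_eq_zero_iff_of_nonneg
      (fun γ hγ => mul_nonneg (he γ hγ) (d.posx γ hγ).le)).mp h1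
  intro γ hγ
  rcases mul_eq_zero.mp (h2 γ hγ) with h | h
  · exact h
  · exact absurd h (d.posx γ hγ).ne'

lemma sum_add_smul (P : Finset V) (f1 f2 : V → ℝ) :
    ∑ γ ∈ P, (f1 γ + f2 γ) • γ = ∑ γ ∈ P, f1 γ • γ + ∑ γ ∈ P, f2 γ • γ := by
  rw [← Finset.sum_add_distrib]
  exact Finset.sum_congr rfl fun γ _ => add_smul _ _ _

lemma cone_subst (hΔP : Δ ⊆ P) (hδ : δ ∈ Δ) (hc : Cone P (Δ.erase δ) δ)
    (hβ : Cone P Δ β ) : Cone P (Δ.erase δ) β := by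
  obtain ⟨c, hc0, hcs, hcsum⟩ := hβ
  obtain ⟨e, he0, hes, hesum⟩ := hc
  have hδP : δ ∈ P := hΔP hδ
  refine ⟨fun γ => (if γ = δ then 0 else c γ) + c δ * e γ, ?_, ?_, ?_⟩
  · intro γ
    have h1 : (0:ℝ) ≤ (if γ = δ then 0 else c γ) := by
      split
      · exact le_refl 0
      · exact hc0 γ
    exact add_nonneg h1 (mul_nonneg (hc0 δ) (he0 γ))
  · intro γ hγ
    dsimp only
    by_cases h : γ = δ
    · rw [if_pos h, h, hes δ (Finset.notMem_erase δ Δ), mul_zero, zero_add]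
    · rw [if_neg h, hcs γ (fun hΔγ => hγ (Finset.mem_erase.mpr ⟨h, hΔγ⟩)),
        hes γ hγ, mul_zero, zero_add]
  · rw [hcsum, sum_split P hδP c, sum_add_smul P _ _,
      sum_mul_smul P (c δ) e, ← hesum, add_comm]

lemma eq_of_smul (d : Data W P x) (hβ : β ∈ P) (hα : α ∈ P) {b : ℝ} (hb : 0 ≤ b)
    (h : β = b • α) : β = α := by
  have h1 : ‖β‖ = 1 := d.unit β hβ
  have h2 : ‖α‖ = 1 := d.unit α hα
  rw [h, norm_smul, h2, mul_one, Real.norm_eq_abs, abs_of_nonneg hb] at h1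
  rw [h, h1, one_smul]

noncomputable def sref (W : Subgroup (V ≃ₗᵢ[ℝ] V)) (α : V) : V ≃ₗᵢ[ℝ] V :=
  if h : ∃ t, t ∈ W ∧ reflFormula α t then h.choose else 1

lemma sref_spec {W : Subgroup (V ≃ₗᵢ[ℝ] V)} {α : V} (h : ∃ t, t ∈ W ∧ reflFormula α t) :
    sref W α ∈ W ∧ reflFormula α (sref W α) := by
  rw [sref, dif_pos h]; exact h.choose_spec

section WithDelta

variable (d : Data W P x) (hΔP : Δ ⊆ P) (hgen : ∀ β ∈ P, Cone P Δ β)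
  (hNoSelf : ∀ δ ∈ Δ, ¬ Cone P (Δ.erase δ) δ)

include d hΔP hgen hNoSelf in
lemma P1 (hα : α ∈ Δ) (hβ : β ∈ Δ) (hne : α ≠ β) : ⟪α, β⟫ ≤ 0 := by
  by_contra hpos
  push_neg at hpos
  have hαP := hΔP hα
  have hβP := hΔP hβ
  have hα1 : ⟪α, α⟫ = 1 := inner_self_unit (d.unit α hαP)
  obtain ⟨t, htW, ht⟩ := d.refl_mem α hαP
  have hγ0 : t β = β - (2 * ⟪α, β⟫) • α := by rw [ht β, hα1, div_one]
  rcases d.closed htW hβP with hPmem | hNmem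
  · -- s_α β positive
    obtain ⟨dd, hdd0, hdds, hddsum⟩ := hgen (t β) hPmem
    set S := ∑ γ ∈ P, (if γ = β then 0 else dd γ) • γ with hS
    have heq : β - (2 * ⟪α, β⟫) • α = dd β • β + S := by
      rw [← hγ0, hddsum, sum_split P hβP dd]
    by_cases hq1 : dd β < 1
    · refine hNoSelf β hβ ⟨fun γ => (1 - dd β)⁻¹ *
        ((if γ = α then 2 * ⟪α, β⟫ else 0) + (if γ = β then 0 else dd γ)), ?_, ?_, ?_⟩
      · intro γ
        dsimp only
        have h2 : (0:ℝ) ≤ (if γ = α then 2 * ⟪α, β⟫ else 0) := by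
          split
          · linarith
          · exact le_refl 0
        have h3 : (0:ℝ) ≤ (if γ = β then 0 else dd γ) := by
          split
          · exact le_refl 0
          · exact hdd0 γ
        have h4 : (0:ℝ) ≤ (1 - dd β)⁻¹ := by
          apply inv_nonneg.mpr; linarith
        exact mul_nonneg h4 (add_nonneg h2 h3)
      · intro γ hγ
        dsimp only
        have hγne : γ = β ∨ γ ∉ Δ := by
          by_cases h : γ = β
          · exact Or.inl h
          · exact Or.inr (fun hΔγ => hγ (Finset.mem_erase.mpr ⟨h, hΔγ⟩))
        rcases hγne with rfl | hout
        · rw [if_neg (Ne.symm hne), if_pos rfl, add_zero, mul_zero]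
        · have hγα : γ ≠ α := fun h => hout (h ▸ hα)
          have hγβ : γ ≠ β := fun h => hout (h ▸ hβ)
          rw [if_neg hγα, if_neg hγβ, hdds γ hout, zero_add, mul_zero]
      · have hkey : (1 - dd β) • β = (2 * ⟪α, β⟫) • α + S := by
          rw [← sub_eq_zero] at heq ⊢
          rw [sub_smul, one_smul, ← heq]
          abel
        have h6 : ∀ γ ∈ P, ((1 - dd β)⁻¹ *
            ((if γ = α then 2 * ⟪α, β⟫ else 0) + (if γ = β then 0 else dd γ))) • γ
            = (1 - dd β)⁻¹ • (((if γ = α then 2 * ⟪α, β⟫ else 0) + (if γ = β then 0 else dd γ)) • γ) :=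
          fun γ _ => by rw [smul_smul]
        rw [Finset.sum_congr rfl h6, ← Finset.smul_sum, sum_add_smul P _ _,
          sum_single P hαP, ← hS, ← hkey, smul_smul,
          inv_mul_cancel₀ (by linarith : (1:ℝ) - dd β ≠ 0), one_smul]
    · push_neg at hq1
      have hzero : ∑ γ ∈ P, ((if γ = α then 2 * ⟪α, β⟫ else 0) +
          ((if γ = β then dd β - 1 else 0) + (if γ = β then 0 else dd γ))) • γ = 0 := by
        rw [sum_add_smul P _ _, sum_add_smul P _ _, sum_single P hαP, sum_single P hβP, ← hS]
        rw [← sub_eq_zero] at heq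
        rw [← sub_eq_zero]
        calc (2 * ⟪α, β⟫) • α + ((dd β - 1) • β + S) - 0
            = -(β - (2 * ⟪α, β⟫) • α - (dd β • β + S)) := by
              rw [sub_smul, one_smul]; abel
          _ = -0 := by rw [heq]
          _ = 0 := by simp
      have hL0 := L0 d _ (fun γ _ => by
        try dsimp only
        have h2 : (0:ℝ) ≤ (if γ = α then 2 * ⟪α, β⟫ else 0) := by
          split
          · linarith
          · exact le_refl 0
        have h3 : (0:ℝ) ≤ (if γ = β then dd β - 1 else 0) := by
          split
          · linarith
          · exact le_refl 0
        have h4 : (0:ℝ) ≤ (if γ = β then 0 else dd γ) := by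
          split
          · exact le_refl 0
          · exact hdd0 γ
        linarith) hzero
      have h5 := hL0 α hαP
      rw [if_pos rfl, if_neg hne, if_neg hne, zero_add] at h5
      have := hdd0 α
      linarith
  · -- s_α β negative
    obtain ⟨dd, hdd0, hdds, hddsum⟩ := hgen _ hNmem
    obtain ⟨bb, hbb0, hbbs, hbbsum⟩ := hgen β hβP
    set S := ∑ γ ∈ P, (if γ = α then 0 else dd γ) • γ with hS
    set T := ∑ γ ∈ P, (if γ = α then 0 else bb γ) • γ with hT
    have hneg : (2 * ⟪α, β⟫) • α - β = dd α • α + S := by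
      have h1 : -(t β) = ∑ γ ∈ P, dd γ • γ := hddsum
      rw [hγ0] at h1
      rw [← sub_eq_zero] at h1 ⊢
      rw [sum_split P hαP dd, ← hS] at h1
      rw [← h1]
      abel
    have hsplitb : β = bb α • α + T := by rw [hbbsum, sum_split P hαP bb]
    by_cases hq : dd α < 2 * ⟪α, β⟫
    · set r := (2 * ⟪α, β⟫ - dd α)⁻¹ with hr
      have hrpos : 0 < r := inv_pos.mpr (by linarith)
      have hkey : (2 * ⟪α, β⟫ - dd α) • α = bb α • α + (T + S) := by
        rw [← sub_eq_zero, sub_smul]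
        have h3 := sub_eq_zero.mpr hneg
        have h2 := sub_eq_zero.mpr hsplitb
        calc (2 * ⟪α, β⟫) • α - dd α • α - (bb α • α + (T + S))
            = ((2 * ⟪α, β⟫) • α - β - (dd α • α + S)) + (β - (bb α • α + T)) := by abel
          _ = 0 + 0 := by rw [h3, h2]
          _ = 0 := by simp
      have hα_eq : α = (r * bb α) • α + r • (T + S) := by
        have h4 := congrArg (fun v : V => r • v) hkey
        rw [smul_smul, inv_mul_cancel₀ (by linarith : 2 * ⟪α, β⟫ - dd α ≠ 0), one_smul,
          smul_add, smul_smul] at h4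
        exact h4
      by_cases hrb : r * bb α < 1
      · refine hNoSelf α hα ⟨fun γ => (1 - r * bb α)⁻¹ *
          (r * ((if γ = α then 0 else bb γ) + (if γ = α then 0 else dd γ))), ?_, ?_, ?_⟩
        · intro γ
          dsimp only
          have h2 : (0:ℝ) ≤ (if γ = α then 0 else bb γ) := by
            split
            · exact le_refl 0
            · exact hbb0 γ
          have h3 : (0:ℝ) ≤ (if γ = α then 0 else dd γ) := by
            split
            · exact le_refl 0
            · exact hdd0 γ
          have h4 : (0:ℝ) ≤ (1 - r * bb α)⁻¹ := by
            apply inv_nonneg.mpr; linarith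
          positivity
        · intro γ hγ
          dsimp only
          by_cases h : γ = α
          · rw [if_pos h, if_pos h, add_zero, mul_zero, mul_zero]
          · have hout : γ ∉ Δ := fun hΔγ => hγ (Finset.mem_erase.mpr ⟨h, hΔγ⟩)
            rw [if_neg h, if_neg h, hbbs γ hout, hdds γ hout, add_zero, mul_zero, mul_zero]
        · have h5 : (1 - r * bb α) • α = r • (T + S) := by
            have h5' := sub_eq_zero.mpr hα_eq
            rw [← sub_eq_zero, sub_smul, one_smul]
            calc α - (r * bb α) • α - r • (T + S)
                = α - ((r * bb α) • α + r • (T + S)) := by abel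
              _ = 0 := h5'
          have h6 : ∀ γ ∈ P, ((1 - r * bb α)⁻¹ *
              (r * ((if γ = α then 0 else bb γ) + (if γ = α then 0 else dd γ)))) • γ
              = (1 - r * bb α)⁻¹ • ((r * ((if γ = α then 0 else bb γ) + (if γ = α then 0 else dd γ))) • γ) :=
            fun γ _ => by rw [smul_smul]
          rw [Finset.sum_congr rfl h6, ← Finset.smul_sum,
            sum_mul_smul P r _, sum_add_smul P _ _, ← hT, ← hS, ← h5, smul_smul,
            inv_mul_cancel₀ (by linarith : (1:ℝ) - r * bb α ≠ 0), one_smul]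
      · push_neg at hrb
        have hzero : ∑ γ ∈ P, ((if γ = α then r * bb α - 1 else 0) +
            (r * ((if γ = α then 0 else bb γ) + (if γ = α then 0 else dd γ)))) • γ = 0 := by
          have h7 : ∀ γ ∈ P, ((if γ = α then r * bb α - 1 else 0) +
              (r * ((if γ = α then 0 else bb γ) + (if γ = α then 0 else dd γ)))) • γ
              = (if γ = α then r * bb α - 1 else 0) • γ +
                (r * ((if γ = α then 0 else bb γ) + (if γ = α then 0 else dd γ))) • γ :=
            fun γ _ => add_smul _ _ _
          rw [Finset.sum_congr rfl h7, Finset.sum_add_distrib, sum_single P hαP,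
            sum_mul_smul P r _, sum_add_smul P _ _, ← hT, ← hS]
          have h8 := sub_eq_zero.mpr hα_eq
          rw [← sub_eq_zero]
          calc (r * bb α - 1) • α + r • (T + S) - 0
              = -(α - ((r * bb α) • α + r • (T + S))) := by rw [sub_smul, one_smul]; abel
            _ = -0 := by rw [h8]
            _ = 0 := by simp
        have hL0 := L0 d _ (fun γ _ => by
          try dsimp only
          have h2 : (0:ℝ) ≤ (if γ = α then r * bb α - 1 else 0) := by
            split
            · linarith
            · exact le_refl 0
          have h3 : (0:ℝ) ≤ (if γ = α then 0 else bb γ) := by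
            split
            · exact le_refl 0
            · exact hbb0 γ
          have h4 : (0:ℝ) ≤ (if γ = α then 0 else dd γ) := by
            split
            · exact le_refl 0
            · exact hdd0 γ
          have h5 : (0:ℝ) ≤ r := hrpos.le
          positivity) hzero
        have hT0 : T = 0 := by
          rw [hT]
          refine Finset.sum_eq_zero (fun γ hγ => ?_)
          by_cases h : γ = α
          · rw [if_pos h, zero_smul]
          · have h9 := hL0 γ hγ
            rw [if_neg h, if_neg h, if_neg h, zero_add] at h9
            have h10 : bb γ + dd γ = 0 := by
              rcases mul_eq_zero.mp h9 with h' | h'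
              · exact absurd h' hrpos.ne'
              · exact h'
            have h11 : bb γ = 0 := by
              have := hbb0 γ; have := hdd0 γ; linarith
            rw [if_neg h, h11, zero_smul]
        have hβα : β = bb α • α := by rw [hsplitb, hT0, add_zero]
        exact (Ne.symm hne) (eq_of_smul d hβP hαP (hbb0 α) hβα)
    · push_neg at hq
      have hzero : ∑ γ ∈ P, ((if γ = β then 1 else 0) +
          ((if γ = α then dd α - 2 * ⟪α, β⟫ else 0) + (if γ = α then 0 else dd γ))) • γ = 0 := by
        rw [sum_add_smul P _ _, sum_add_smul P _ _, sum_single P hαP, sum_single P hβP, ← hS]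
        have h3 := sub_eq_zero.mpr hneg
        rw [← sub_eq_zero]
        calc (1:ℝ) • β + ((dd α - 2 * ⟪α, β⟫) • α + S) - 0
            = -((2 * ⟪α, β⟫) • α - β - (dd α • α + S)) := by
              rw [one_smul, sub_smul]; abel
          _ = -0 := by rw [h3]
          _ = 0 := by simp
      have hL0 := L0 d _ (fun γ _ => by
        try dsimp only
        have h2 : (0:ℝ) ≤ (if γ = β then 1 else 0) := by
          split
          · linarith
          · exact le_refl 0
        have h3 : (0:ℝ) ≤ (if γ = α then dd α - 2 * ⟪α, β⟫ else 0) := by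
          split
          · linarith
          · exact le_refl 0
        have h4 : (0:ℝ) ≤ (if γ = α then 0 else dd γ) := by
          split
          · exact le_refl 0
          · exact hdd0 γ
        linarith) hzero
      have h5 := hL0 β hβP
      rw [if_pos rfl, if_neg (Ne.symm hne), if_neg (Ne.symm hne), zero_add] at h5
      have := hdd0 β
      linarith

include d hΔP hgen hNoSelf in
lemma P2 (e : V → ℝ) (hs : ∀ γ, γ ∉ Δ → e γ = 0)
    (hsum : ∑ γ ∈ P, e γ • γ = 0) : ∀ γ ∈ P, e γ = 0 := by
  classical
  set u := ∑ γ ∈ P, (max (e γ) 0) • γ with hu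
  set v := ∑ γ ∈ P, (max (-e γ) 0) • γ with hv
  have hmax : ∀ a : ℝ, max a 0 - max (-a) 0 = a := by
    intro a
    rcases le_total a 0 with h | h
    · rw [max_eq_right h, max_eq_left (neg_nonneg.mpr h)]; ring
    · rw [max_eq_left h, max_eq_right (neg_nonpos.mpr h)]; ring
  have huv : u = v := by
    rw [← sub_eq_zero, hu, hv, ← Finset.sum_sub_distrib, ← hsum]
    refine Finset.sum_congr rfl (fun γ _ => ?_)
    rw [← sub_smul, hmax]
  have hdouble : ⟪u, v⟫ = ∑ γ ∈ P, ∑ γ' ∈ P, (max (e γ) 0 * (max (-e γ') 0 * ⟪γ, γ'⟫)) := by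
    rw [hu, sum_inner]
    refine Finset.sum_congr rfl (fun γ _ => ?_)
    rw [real_inner_smul_left, hv, inner_sum, Finset.mul_sum]
    refine Finset.sum_congr rfl (fun γ' _ => ?_)
    rw [real_inner_smul_right]
  have hnonpos : ⟪u, v⟫ ≤ 0 := by
    rw [hdouble]
    refine Finset.sum_nonpos (fun γ _ => Finset.sum_nonpos (fun γ' _ => ?_))
    by_cases hγγ : γ = γ'
    · subst hγγ
      have : max (e γ) 0 * max (-e γ) 0 = 0 := by
        rcases le_total (e γ) 0 with h | h
        · rw [max_eq_right h, zero_mul]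
        · rw [max_eq_right (neg_nonpos.mpr h), mul_zero]
      rw [← mul_assoc, this, zero_mul]
    · by_cases hγΔ : γ ∈ Δ
      · by_cases hγ'Δ : γ' ∈ Δ
        · have h1 := P1 d hΔP hgen hNoSelf hγΔ hγ'Δ hγγ
          have h2 : max (-e γ') 0 * ⟪γ, γ'⟫ ≤ 0 :=
            mul_nonpos_iff.mpr (Or.inl ⟨le_max_right _ _, h1⟩)
          exact mul_nonpos_iff.mpr (Or.inl ⟨le_max_right _ _, h2⟩)
        · rw [hs γ' hγ'Δ, neg_zero, max_self, zero_mul, mul_zero]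
      · rw [hs γ hγΔ, max_self, zero_mul]
  have hu0 : u = 0 := by
    have h3 : ⟪u, u⟫ ≤ 0 := by
      rw [congrArg (fun w => ⟪u, w⟫) huv]
      exact hnonpos
    exact real_inner_self_nonpos.mp h3
  have hv0 : v = 0 := huv ▸ hu0
  have hle : ∀ γ ∈ P, e γ ≤ 0 := by
    intro γ hγ
    have := L0 d (fun γ => max (e γ) 0) (fun γ _ => le_max_right _ _) (hu ▸ hu0) γ hγ
    rw [max_eq_right_iff] at this
    exact this
  have hge : ∀ γ ∈ P, 0 ≤ e γ := by
    intro γ hγ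
    have := L0 d (fun γ => max (-e γ) 0) (fun γ _ => le_max_right _ _) (hv ▸ hv0) γ hγ
    rw [max_eq_right_iff] at this
    linarith
  exact fun γ hγ => le_antisymm (hle γ hγ) (hge γ hγ)

include d hΔP hgen in
lemma P4 (hβ : β ∈ P) : ∃ γ ∈ Δ, 0 < ⟪γ, β⟫ := by
  by_contra hcon
  push_neg at hcon
  obtain ⟨bb, hbb0, hbbs, hbbsum⟩ := hgen β hβ
  have h1 : ⟪β, β⟫ = 1 := inner_self_unit (d.unit β hβ)
  have h2 : ⟪β, β⟫ ≤ 0 := by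
    rw [congrArg (fun w : V => ⟪w, β⟫) hbbsum, sum_inner]
    refine Finset.sum_nonpos (fun γ hγ => ?_)
    rw [real_inner_smul_left]
    by_cases hγΔ : γ ∈ Δ
    · have h3 : ⟪γ, β⟫ ≤ 0 := hcon γ hγΔ
      exact mul_nonpos_iff.mpr (Or.inl ⟨hbb0 γ, h3⟩)
    · rw [hbbs γ hγΔ, zero_mul]
  linarith

include d hΔP hgen hNoSelf in
lemma P3 (hα : α ∈ Δ) (hβ : β ∈ P) (hne : β ≠ α) {t : V ≃ₗᵢ[ℝ] V}
    (htW : t ∈ W) (ht : reflFormula α t) : t β ∈ P := by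
  have hαP := hΔP hα
  have hα1 : ⟪α, α⟫ = 1 := inner_self_unit (d.unit α hαP)
  have hγ0 : t β = β - (2 * ⟪α, β⟫) • α := by rw [ht β, hα1, div_one]
  rcases d.closed htW hβ with hPmem | hNmem
  · exact hPmem
  · exfalso
    obtain ⟨dd, hdd0, hdds, hddsum⟩ := hgen _ hNmem
    obtain ⟨bb, hbb0, hbbs, hbbsum⟩ := hgen β hβ
    -- 0 = t β + (-(t β)) = ∑ (bb γ + dd γ - ite γ=α (2⟪α,β⟫) 0) • γ
    have hzero : ∑ γ ∈ P, (bb γ + dd γ - (if γ = α then 2 * ⟪α, β⟫ else 0)) • γ = 0 := by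
      have h1 : ∀ γ ∈ P, (bb γ + dd γ - (if γ = α then 2 * ⟪α, β⟫ else 0)) • γ
          = (bb γ + dd γ) • γ - (if γ = α then 2 * ⟪α, β⟫ else 0) • γ :=
        fun γ _ => sub_smul _ _ _
      rw [Finset.sum_congr rfl h1, Finset.sum_sub_distrib, sum_add_smul P _ _,
        sum_single P hαP, ← hbbsum, ← hddsum, hγ0]
      abel
    have hP2 := P2 d hΔP hgen hNoSelf _ (fun γ hγ => by
      have hγα : γ ≠ α := fun h => hγ (h ▸ hα)
      rw [hbbs γ hγ, hdds γ hγ, if_neg hγα]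
      ring) hzero
    -- coefficients vanish; in particular for γ ≠ α in P, bb γ = 0
    have hT0 : ∑ γ ∈ P, (if γ = α then 0 else bb γ) • γ = 0 := by
      refine Finset.sum_eq_zero (fun γ hγ => ?_)
      by_cases h : γ = α
      · rw [if_pos h, zero_smul]
      · have h9 := hP2 γ hγ
        rw [if_neg h, sub_zero] at h9
        have h11 : bb γ = 0 := by
          have := hbb0 γ; have := hdd0 γ; linarith
        rw [if_neg h, h11, zero_smul]
    have hβα : β = bb α • α := by
      rw [hbbsum, sum_split P hαP bb, hT0, add_zero]
    exact hne (eq_of_smul d hβ hαP (hbb0 α) hβα)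

include d hΔP hgen hNoSelf in
lemma P5 : ∀ β ∈ P, ∃ g ∈ Subgroup.closure {h : V ≃ₗᵢ[ℝ] V | ∃ δ ∈ Δ, h = sref W δ},
    ∃ δ ∈ Δ, g δ = β := by
  suffices H : ∀ n : ℕ, ∀ β ∈ P, (P.filter (fun γ => ⟪γ, x⟫ < ⟪β, x⟫)).card = n →
      ∃ g ∈ Subgroup.closure {h : V ≃ₗᵢ[ℝ] V | ∃ δ ∈ Δ, h = sref W δ}, ∃ δ ∈ Δ, g δ = β by
    exact fun β hβ => H _ β hβ rfl
  intro n
  induction n using Nat.strong_induction_on with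
  | _ n ih =>
    intro β hβ hn
    by_cases hβΔ : β ∈ Δ
    · exact ⟨1, one_mem _, β, hβΔ, rfl⟩
    · obtain ⟨α, hαΔ, hαβ⟩ := P4 d hΔP hgen hβ
      obtain ⟨t0, ht0W, ht0⟩ := d.refl_mem α (hΔP hαΔ)
      have hne : β ≠ α := fun h => hβΔ (h ▸ hαΔ)
      have hβ' : t0 β ∈ P := P3 d hΔP hgen hNoSelf hαΔ hβ hne ht0W ht0
      have hα1 : ⟪α, α⟫ = 1 := inner_self_unit (d.unit α (hΔP hαΔ))
      have hform : t0 β = β - (2 * ⟪α, β⟫) • α := by rw [ht0 β, hα1, div_one]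
      have hlt : ⟪t0 β, x⟫ < ⟪β, x⟫ := by
        rw [hform, inner_sub_left, real_inner_smul_left]
        have h1 := d.posx α (hΔP hαΔ)
        nlinarith
      have hsub : P.filter (fun γ => ⟪γ, x⟫ < ⟪t0 β, x⟫) ⊆ P.filter (fun γ => ⟪γ, x⟫ < ⟪β, x⟫) := by
        intro γ hγ
        rw [Finset.mem_filter] at *
        exact ⟨hγ.1, hγ.2.trans hlt⟩
      have hm : (P.filter (fun γ => ⟪γ, x⟫ < ⟪t0 β, x⟫)).card < n := by
        rw [← hn]
        apply Finset.card_lt_card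
        rw [Finset.ssubset_iff_of_subset hsub]
        exact ⟨t0 β, Finset.mem_filter.mpr ⟨hβ', hlt⟩, by
          rw [Finset.mem_filter]
          push_neg
          intro _
          exact le_refl _⟩
      obtain ⟨g, hgcl, δ, hδΔ, hgδ⟩ := ih _ hm (t0 β) hβ' rfl
      refine ⟨sref W α * g, ?_, δ, hδΔ, ?_⟩
      · exact mul_mem (Subgroup.subset_closure ⟨α, hαΔ, rfl⟩) hgcl
      · rw [mul_apply, hgδ]
        have hseq : sref W α = t0 := refl_unique (sref_spec ⟨t0, ht0W, ht0⟩).2 ht0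
        rw [hseq]
        have hsq := congrArg (fun h : V ≃ₗᵢ[ℝ] V => h β) (refl_sq (d.nz (hΔP hαΔ)) ht0)
        simpa [mul_apply, one_apply] using hsq

include d hΔP in
lemma word_of_closure {g : V ≃ₗᵢ[ℝ] V}
    (hg : g ∈ Subgroup.closure {h : V ≃ₗᵢ[ℝ] V | ∃ δ ∈ Δ, h = sref W δ}) :
    ∃ l : List V, (∀ δ ∈ l, δ ∈ Δ) ∧ (l.map (sref W)).prod = g := by
  refine Subgroup.closure_induction ?_ ?_ ?_ ?_ hg
  · rintro h ⟨δ, hδ, rfl⟩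
    exact ⟨[δ], by simp [hδ], by simp⟩
  · exact ⟨[], by simp, by simp⟩
  · rintro a b _ _ ⟨l1, hl1, hp1⟩ ⟨l2, hl2, hp2⟩
    refine ⟨l1 ++ l2, ?_, by rw [List.map_append, List.prod_append, hp1, hp2]⟩
    intro δ hδ
    rcases List.mem_append.mp hδ with h | h
    exacts [hl1 δ h, hl2 δ h]
  · rintro a _ ⟨l, hl, hp⟩
    refine ⟨l.reverse, fun δ hδ => hl δ (List.mem_reverse.mp hδ), ?_⟩
    rw [← hp, List.prod_inv_reverse]
    have h2 : (l.map (sref W)).map Inv.inv = l.map (sref W) := by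
      rw [List.map_map]
      refine List.map_congr_left (fun δ hδ => ?_)
      obtain ⟨hmem, hform⟩ := sref_spec (d.refl_mem δ (hΔP (hl δ hδ)))
      exact refl_inv (d.nz (hΔP (hl δ hδ))) hform
    rw [h2, List.map_reverse]

include d hΔP hgen hNoSelf in
lemma E1 : ∀ l : List V, (∀ δ ∈ l, δ ∈ Δ) → ∀ β ∈ P, ⟪((l.map (sref W)).prod) β, x⟫ < 0 →
    ∃ l1 l2 δ, δ ∈ Δ ∧ l = l1 ++ δ :: l2 ∧ ((l2.map (sref W)).prod) β = δ := by
  intro l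
  induction l with
  | nil =>
    intro _ β hβ hneg
    simp only [List.map_nil, List.prod_nil] at hneg
    rw [one_apply] at hneg
    exact absurd hneg (not_lt.mpr (d.posx β hβ).le)
  | cons δ0 l' ih =>
    intro hl β hβ hneg
    have hδ0 : δ0 ∈ Δ := hl δ0 List.mem_cons_self
    have hl' : ∀ δ ∈ l', δ ∈ Δ := fun δ hδ => hl δ (List.mem_cons_of_mem _ hδ)
    have hwW : (l'.map (sref W)).prod ∈ W := by
      apply list_prod_mem
      intro g hg
      rw [List.mem_map] at hg
      obtain ⟨δ, hδ, rfl⟩ := hg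
      exact (sref_spec (d.refl_mem δ (hΔP (hl' δ hδ)))).1
    have hprod : (((δ0 :: l').map (sref W)).prod) β = sref W δ0 (((l'.map (sref W)).prod) β) := by
      rw [List.map_cons, List.prod_cons, mul_apply]
    rcases d.closed hwW hβ with hyP | hyN
    · rw [hprod] at hneg
      by_cases hyδ0 : ((l'.map (sref W)).prod) β = δ0
      · exact ⟨[], l', δ0, hδ0, rfl, hyδ0⟩
      · exfalso
        obtain ⟨hm, hf⟩ := sref_spec (d.refl_mem δ0 (hΔP hδ0))
        have hP3 := P3 d hΔP hgen hNoSelf hδ0 hyP hyδ0 hm hf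
        exact absurd hneg (not_lt.mpr (d.posx _ hP3).le)
    · have hyneg : ⟪((l'.map (sref W)).prod) β, x⟫ < 0 := by
        have h1 := d.posx _ hyN
        rw [inner_neg_left] at h1
        linarith
      obtain ⟨l1, l2, δ, hδΔ, hsplit, heq⟩ := ih hl' β hβ hyneg
      exact ⟨δ0 :: l1, l2, δ, hδΔ, by rw [hsplit]; rfl, heq⟩

include d hΔP hgen hNoSelf in
lemma simple_gen (hWgen : Subgroup.closure {g : V ≃ₗᵢ[ℝ] V | g ∈ W ∧ IsReflection g} = W) :
    W ≤ Subgroup.closure {h : V ≃ₗᵢ[ℝ] V | ∃ δ ∈ Δ, h = sref W δ} := by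
  conv_lhs => rw [← hWgen]
  rw [Subgroup.closure_le]
  rintro t ⟨htW, α0, hα0, ht0⟩
  have hn0 : ‖α0‖ ≠ 0 := norm_ne_zero_iff.mpr hα0
  have hun : ‖(‖α0‖⁻¹ • α0 : V)‖ = 1 := by
    rw [norm_smul, norm_inv, norm_norm, inv_mul_cancel₀ hn0]
  have hut : reflFormula (‖α0‖⁻¹ • α0) t := refl_smul (inv_ne_zero hn0) hα0 ht0
  have hcases : ∃ v, v ∈ P ∧ reflFormula v t := by
    rcases d.total _ hun t htW hut with h | h
    · exact ⟨_, h, hut⟩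
    · exact ⟨_, h, refl_neg hut⟩
  obtain ⟨v, hvP, hvt⟩ := hcases
  obtain ⟨g, hgcl, δ, hδΔ, hgδ⟩ := P5 d hΔP hgen hNoSelf v hvP
  obtain ⟨hδm, hδf⟩ := sref_spec (d.refl_mem δ (hΔP hδΔ))
  have hconj : reflFormula v (g * sref W δ * g⁻¹) := by
    have h1 := refl_conj hδf g
    rwa [hgδ] at h1
  have ht_eq : t = g * sref W δ * g⁻¹ := refl_unique hvt hconj
  rw [SetLike.mem_coe, ht_eq]
  exact mul_mem (mul_mem hgcl (Subgroup.subset_closure ⟨δ, hδΔ, rfl⟩)) (inv_mem hgcl)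

end WithDelta

lemma main (hWgen : Subgroup.closure {g : V ≃ₗᵢ[ℝ] V | g ∈ W ∧ IsReflection g} = W)
    (d : Data W P x) {g : V ≃ₗᵢ[ℝ] V} (hgW : g ∈ W) (hgx : g x = x) : g = 1 := by
  classical
  -- construct a minimal generating subset Δ of P
  have hPself : ∀ β ∈ P, Cone P P β := by
    intro β hβ
    refine ⟨fun γ => if γ = β then 1 else 0, ?_, ?_, ?_⟩
    · intro γ
      dsimp only
      split
      · exact zero_le_one
      · exact le_refl 0
    · intro γ hγ
      dsimp only
      rw [if_neg (fun h : γ = β => hγ (h ▸ hβ))]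
    · rw [sum_single P hβ 1, one_smul]
  obtain ⟨Δ, hΔmem, hΔmin⟩ := Finset.exists_min_image
    (P.powerset.filter (fun S => ∀ β ∈ P, Cone P S β)) Finset.card
    ⟨P, Finset.mem_filter.mpr ⟨Finset.mem_powerset_self P, hPself⟩⟩
  rw [Finset.mem_filter, Finset.mem_powerset] at hΔmem
  obtain ⟨hΔP, hgen⟩ := hΔmem
  have hNoSelf : ∀ δ ∈ Δ, ¬ Cone P (Δ.erase δ) δ := by
    intro δ hδ hcone
    have hall : ∀ β ∈ P, Cone P (Δ.erase δ) β :=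
      fun β hβ => cone_subst hΔP hδ hcone (hgen β hβ)
    have hmem : Δ.erase δ ∈ P.powerset.filter (fun S => ∀ β ∈ P, Cone P S β) :=
      Finset.mem_filter.mpr ⟨Finset.mem_powerset.mpr ((Finset.erase_subset δ Δ).trans hΔP), hall⟩
    have h1 := hΔmin _ hmem
    have h2 : (Δ.erase δ).card < Δ.card := Finset.card_erase_lt_of_mem hδ
    omega
  -- g lies in the closure of the simple reflections
  have hgcl : g ∈ Subgroup.closure {h : V ≃ₗᵢ[ℝ] V | ∃ δ ∈ Δ, h = sref W δ} :=
    simple_gen d hΔP hgen hNoSelf hWgen hgW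
  -- minimal word
  set K := {m : ℕ | ∃ l : List V, (∀ δ ∈ l, δ ∈ Δ) ∧ l.length = m ∧ (l.map (sref W)).prod = g}
    with hK
  have hKne : K.Nonempty := by
    obtain ⟨l, hl, hp⟩ := word_of_closure d hΔP hgcl
    exact ⟨l.length, l, hl, rfl, hp⟩
  obtain ⟨l, hlΔ, hlen, hlprod⟩ := Nat.sInf_mem hKne
  rcases Nat.eq_zero_or_pos (sInf K) with h0 | hposK
  · rw [h0] at hlen
    rw [List.length_eq_zero_iff] at hlen
    subst hlen
    simpa using hlprod.symm
  exfalso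
  have hlne : l ≠ [] := by
    intro h
    rw [h] at hlen
    simp at hlen
    omega
  obtain ⟨l₀, δL, rfl⟩ : ∃ l₀ δL, l = l₀ ++ [δL] :=
    ⟨l.dropLast, l.getLast hlne, (List.dropLast_append_getLast hlne).symm⟩
  have hδL : δL ∈ Δ := hlΔ δL (by simp)
  have hl₀ : ∀ δ ∈ l₀, δ ∈ Δ := fun δ hδ => hlΔ δ (by simp [hδ])
  have hδLP : δL ∈ P := hΔP hδL
  obtain ⟨hsm, hsf⟩ := sref_spec (d.refl_mem δL hδLP)
  have hgsplit : (l₀.map (sref W)).prod * sref W δL = g := by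
    rw [← hlprod, List.map_append, List.prod_append]
    simp
  have hw0W : (l₀.map (sref W)).prod ∈ W := by
    apply list_prod_mem
    intro h hh
    rw [List.mem_map] at hh
    obtain ⟨δ, hδ, rfl⟩ := hh
    exact (sref_spec (d.refl_mem δ (hΔP (hl₀ δ hδ)))).1
  rcases d.closed hw0W hδLP with hqP | hqN
  · -- w0 δL positive ⇒ g δL negative, contradiction with g x = x
    have h1 : g δL = -((l₀.map (sref W)).prod δL) := by
      rw [← hgsplit, mul_apply, refl_apply_self (d.nz hδLP) hsf, map_neg]
    have h2 : ⟪g δL, x⟫ = ⟪δL, x⟫ := by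
      conv_lhs => rw [← hgx]
      exact g.inner_map_map δL x
    have h3 := d.posx δL hδLP
    have h4 := d.posx _ hqP
    rw [h1, inner_neg_left] at h2
    linarith
  · -- w0 δL negative : deletion, contradicting minimality
    have hneg : ⟪(l₀.map (sref W)).prod δL, x⟫ < 0 := by
      have h1 := d.posx _ hqN
      rw [inner_neg_left] at h1
      linarith
    obtain ⟨l1, l2, δ, hδΔ, hsplit2, heq2⟩ :=
      E1 d hΔP hgen hNoSelf l₀ hl₀ δL hδLP hneg
    have hδP' : δ ∈ P := hΔP hδΔ
    obtain ⟨hsm2, hsf2⟩ := sref_spec (d.refl_mem δ hδP')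
    have hconj : reflFormula δ ((l2.map (sref W)).prod * sref W δL * ((l2.map (sref W)).prod)⁻¹) := by
      have h1 := refl_conj hsf ((l2.map (sref W)).prod)
      rwa [heq2] at h1
  -- `sref W δ * prod l2 = prod l2 * sref W δL`
    have hcomm : sref W δ * (l2.map (sref W)).prod
        = (l2.map (sref W)).prod * sref W δL := by
      have h5 : sref W δ = (l2.map (sref W)).prod * sref W δL * ((l2.map (sref W)).prod)⁻¹ :=
        refl_unique hsf2 hconj
      rw [h5]
      group
    have hsq : sref W δL * sref W δL = 1 := refl_sq (d.nz hδLP) hsf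
    have hl0prod : (l₀.map (sref W)).prod
        = (l1.map (sref W)).prod * ((l2.map (sref W)).prod * sref W δL) := by
      rw [hsplit2, List.map_append, List.prod_append, List.map_cons, List.prod_cons, hcomm]
    have hnew : ((l1 ++ l2).map (sref W)).prod = g := by
      rw [List.map_append, List.prod_append, ← hgsplit, hl0prod,
        mul_assoc, mul_assoc, hsq, mul_one]
    have hmemK : (l1 ++ l2).length ∈ K := by
      refine ⟨l1 ++ l2, ?_, rfl, hnew⟩
      intro δ' hδ'
      rcases List.mem_append.mp hδ' with h | h
      · exact hl₀ δ' (by rw [hsplit2]; simp [h])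
      · exact hl₀ δ' (by rw [hsplit2]; simp [h])
    have hlenlt : (l1 ++ l2).length < sInf K := by
      rw [← hlen, hsplit2]
      simp [List.length_append]
    exact absurd (Nat.sInf_le hmemK) (not_le.mpr hlenlt)

end LemB

section Final

variable {W : Subgroup (V ≃ₗᵢ[ℝ] V)}

def rootSet (W : Subgroup (V ≃ₗᵢ[ℝ] V)) : Set V :=
  {α | ‖α‖ = 1 ∧ ∃ t, t ∈ W ∧ reflFormula α t}

lemma root_pm {α α' : V} {t : V ≃ₗᵢ[ℝ] V} (hα : ‖α‖ = 1) (ht : reflFormula α t)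
    (hα' : ‖α'‖ = 1) (ht' : reflFormula α' t) : α' = α ∨ α' = -α := by
  have hαnz : α ≠ 0 := by rw [← norm_ne_zero_iff, hα]; exact one_ne_zero
  have hα'nz : α' ≠ 0 := by rw [← norm_ne_zero_iff, hα']; exact one_ne_zero
  have h1 : t α' = -α' := refl_apply_self hα'nz ht'
  have h2 : t α' = α' - (2 * ⟪α, α'⟫) • α := by rw [ht α', inner_self_unit hα, div_one]
  have h5 : (2 * ⟪α, α'⟫) • α = (2:ℝ) • α' := by
    have h6 := sub_eq_zero.mpr (h2.symm.trans h1)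
    rw [← sub_eq_zero]
    calc (2 * ⟪α, α'⟫) • α - (2:ℝ) • α'
        = -((α' - (2 * ⟪α, α'⟫) • α) - -α') := by rw [two_smul]; abel
      _ = -0 := by rw [h6]
      _ = 0 := by simp
  have h3 : α' = ⟪α, α'⟫ • α := by
    have h7 := congrArg (fun v : V => (2:ℝ)⁻¹ • v) h5
    rw [smul_smul, smul_smul,
      show (2:ℝ)⁻¹ * (2 * ⟪α, α'⟫) = ⟪α, α'⟫ by ring,
      show (2:ℝ)⁻¹ * 2 = 1 by norm_num, one_smul] at h7
    exact h7.symm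
  have h8 : |⟪α, α'⟫| = 1 := by
    have h9 := congrArg norm h3
    rw [norm_smul, hα, hα', mul_one, Real.norm_eq_abs] at h9
    exact h9.symm
  rcases abs_eq (by norm_num : (0:ℝ) ≤ 1) |>.mp h8 with h | h
  · left; rw [h3, h, one_smul]
  · right; rw [h3, h, neg_one_smul]

lemma rootSet_finite (hfin : Finite W) : (rootSet W).Finite := by
  classical
  have : Finite ↥(W : Set (V ≃ₗᵢ[ℝ] V)) := hfin
  have hWset : (W : Set (V ≃ₗᵢ[ℝ] V)).Finite := Set.toFinite _
  have hsub : rootSet W ⊆ ⋃ t ∈ (W : Set (V ≃ₗᵢ[ℝ] V)), {α | ‖α‖ = 1 ∧ reflFormula α t} := by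
    rintro α ⟨hα, t, htW, ht⟩
    exact Set.mem_biUnion htW ⟨hα, ht⟩
  refine Set.Finite.subset (Set.Finite.biUnion hWset (fun t htW => ?_)) hsub
  by_cases hne : ∃ α : V, ‖α‖ = 1 ∧ reflFormula α t
  · obtain ⟨α0, hα0, ht0⟩ := hne
    refine Set.Finite.subset ((Set.finite_singleton (-α0)).insert α0) ?_
    rintro α ⟨hα, ht'⟩
    rcases root_pm hα0 ht0 hα ht' with h | h
    · exact Set.mem_insert_iff.mpr (Or.inl h)
    · exact Set.mem_insert_iff.mpr (Or.inr (by simp [h]))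
  · have hempty : {α : V | ‖α‖ = 1 ∧ reflFormula α t} = ∅ := by
      ext α
      simp only [Set.mem_setOf_eq, Set.mem_empty_iff_false, iff_false]
      intro h
      exact hne ⟨α, h⟩
    rw [hempty]
    exact Set.finite_empty

lemma exists_root_in_moved [FiniteDimensional ℝ V] (hW : IsReflectionGroup W)
    {w : V ≃ₗᵢ[ℝ] V} (hwW : w ∈ W) (hw1 : w ≠ 1) :
    ∃ α t, α ≠ 0 ∧ t ∈ W ∧ reflFormula α t ∧ α ∈ LinearMap.range (oneSub w) := by
  classical
  have hfin := rootSet_finite (V := V) (W := W) hW.1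
  by_contra hcon
  push_neg at hcon
  have hnoperp : ∀ α ∈ hfin.toFinset, ¬ (fixedSpace w ≤ (ℝ ∙ α)ᗮ) := by
    intro α hαf hle
    rw [Set.Finite.mem_toFinset] at hαf
    obtain ⟨hα1, t, htW, ht⟩ := hαf
    have hα0 : α ≠ 0 := by rw [← norm_ne_zero_iff, hα1]; exact one_ne_zero
    have hmem : α ∈ (fixedSpace w)ᗮ := by
      rw [Submodule.mem_orthogonal]
      intro u hu
      rw [real_inner_comm]
      exact Submodule.mem_orthogonal_singleton_iff_inner_right.mp (hle hu)
    rw [← range_oneSub w] at hmem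
    exact hcon α t hα0 htW ht hmem
  obtain ⟨x0, hx0⟩ := avoid_subspaces hfin.toFinset
    (fun α => ((ℝ ∙ α)ᗮ).comap (fixedSpace w).subtype) (by
      intro α hαf htop
      apply hnoperp α hαf
      intro u hu
      have htop' : (((ℝ ∙ α)ᗮ).comap (fixedSpace w).subtype) = ⊤ := htop
      have h1 : (⟨u, hu⟩ : fixedSpace w) ∈ (((ℝ ∙ α)ᗮ).comap (fixedSpace w).subtype) := by
        rw [htop']; trivial
      exact Submodule.mem_comap.mp h1)
  set x : V := (x0 : V) with hx
  have hwx : w x = x := x0.2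
  have hsign : ∀ α : V, ‖α‖ = 1 → ∀ t, t ∈ W → reflFormula α t → ⟪α, x⟫ ≠ 0 := by
    intro α hα1 t htW ht h0
    have hαf : α ∈ hfin.toFinset := by
      rw [Set.Finite.mem_toFinset]; exact ⟨hα1, t, htW, ht⟩
    apply hx0 α hαf
    rw [Submodule.mem_comap]
    exact Submodule.mem_orthogonal_singleton_iff_inner_right.mpr h0
  set P : Finset V := hfin.toFinset.filter (fun α => 0 < ⟪α, x⟫) with hP
  have hmemP : ∀ α : V, α ∈ P ↔ (α ∈ rootSet W ∧ 0 < ⟪α, x⟫) := by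
    intro α
    rw [hP, Finset.mem_filter, Set.Finite.mem_toFinset]
  have d : LemB.Data W P x := by
    refine ⟨?_, ?_, ?_, ?_⟩
    · intro α hα
      exact ((hmemP α).mp hα).1.1
    · intro α hα
      exact ((hmemP α).mp hα).2
    · intro α hα
      exact ((hmemP α).mp hα).1.2
    · intro α hα1 t htW ht
      have h0 := hsign α hα1 t htW ht
      rcases h0.lt_or_gt with h | h
      · right
        rw [hmemP]
        refine ⟨⟨by rw [norm_neg]; exact hα1, t, htW, refl_neg ht⟩, ?_⟩
        rw [inner_neg_left]
        linarith
      · left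
        exact (hmemP α).mpr ⟨⟨hα1, t, htW, ht⟩, h⟩
  exact hw1 (LemB.main hW.2 d hwW hwx)

lemma word_subtype (l : List (V ≃ₗᵢ[ℝ] V)) (hl : ∀ y ∈ l, y ∈ W ∧ IsReflection y) :
    ∃ l' : List W, l'.length = l.length ∧ (∀ t ∈ l', IsReflection (t : W).1) ∧
      ((l'.prod : W) : V ≃ₗᵢ[ℝ] V) = l.prod := by
  induction l with
  | nil => exact ⟨[], rfl, by simp, by simp⟩
  | cons a l ih =>
    obtain ⟨l', h1, h2, h3⟩ := ih (fun y hy => hl y (List.mem_cons_of_mem _ hy))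
    obtain ⟨haW, haR⟩ := hl a List.mem_cons_self
    refine ⟨⟨a, haW⟩ :: l', by simp [h1], ?_, ?_⟩
    · intro t ht
      rcases List.mem_cons.mp ht with rfl | ht
      · exact haR
      · exact h2 t ht
    · rw [List.prod_cons, List.prod_cons, Subgroup.coe_mul, h3]

lemma refLen_set_nonempty (hW : IsReflectionGroup W) (w : W) :
    {k | ∃ l : List W, l.length = k ∧ (∀ t ∈ l, IsReflection (t : W).1) ∧ l.prod = w}.Nonempty := by
  have hwcl : (w : V ≃ₗᵢ[ℝ] V) ∈ Subgroup.closure {g | g ∈ W ∧ IsReflection g} := by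
    rw [hW.2]; exact w.2
  have hword : ∃ l : List (V ≃ₗᵢ[ℝ] V), (∀ y ∈ l, y ∈ W ∧ IsReflection y) ∧
      l.prod = (w : V ≃ₗᵢ[ℝ] V) := by
    refine Subgroup.closure_induction ?_ ?_ ?_ ?_ hwcl
    · intro g hg
      exact ⟨[g], by simpa using hg, by simp⟩
    · exact ⟨[], by simp, by simp⟩
    · rintro a b _ _ ⟨l1, hl1, hp1⟩ ⟨l2, hl2, hp2⟩
      refine ⟨l1 ++ l2, ?_, by rw [List.prod_append, hp1, hp2]⟩
      intro y hy
      rcases List.mem_append.mp hy with h | h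
      exacts [hl1 y h, hl2 y h]
    · rintro a _ ⟨l, hl, hp⟩
      refine ⟨l.reverse, fun y hy => hl y (List.mem_reverse.mp hy), ?_⟩
      rw [← hp, List.prod_inv_reverse]
      have h2 : l.map Inv.inv = l := by
        conv_rhs => rw [← List.map_id l]
        refine List.map_congr_left (fun y hy => ?_)
        obtain ⟨α, hα, hαy⟩ := (hl y hy).2
        exact refl_inv hα hαy
      rw [h2]
  obtain ⟨l, hl, hp⟩ := hword
  obtain ⟨l', h1, h2, h3⟩ := word_subtype l hl
  refine ⟨l'.length, l', rfl, h2, ?_⟩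
  apply Subtype.ext
  rw [h3, hp]

lemma refLen_le [FiniteDimensional ℝ V] (hW : IsReflectionGroup W) (w : W) :
    refLen W w ≤ finrank ℝ V - finrank ℝ (fixedSpace (w : V ≃ₗᵢ[ℝ] V)) := by
  suffices H : ∀ n : ℕ, ∀ w : W, finrank ℝ V - finrank ℝ (fixedSpace (w : V ≃ₗᵢ[ℝ] V)) = n →
      refLen W w ≤ n by
    exact H _ w rfl
  intro n
  induction n using Nat.strong_induction_on with
  | _ n ih =>
    intro w hn
    by_cases hw1 : (w : V ≃ₗᵢ[ℝ] V) = 1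
    · have h0 : (0:ℕ) ∈ {k | ∃ l : List W, l.length = k ∧ (∀ t ∈ l, IsReflection (t : W).1) ∧
          l.prod = w} := ⟨[], rfl, by simp, by apply Subtype.ext; simp [hw1]⟩
      calc refLen W w ≤ 0 := Nat.sInf_le h0
        _ ≤ n := Nat.zero_le n
    · obtain ⟨α, t, hα0, htW, ht, hmem⟩ := exists_root_in_moved hW w.2 hw1
      have hstep := step_lemma hα0 ht (w : V ≃ₗᵢ[ℝ] V) hmem
      set w' : W := ⟨t, htW⟩ * w with hw'
      have hw'coe : (w' : V ≃ₗᵢ[ℝ] V) = t * (w : V ≃ₗᵢ[ℝ] V) := rfl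
      have hfle : finrank ℝ (fixedSpace (w' : V ≃ₗᵢ[ℝ] V)) ≤ finrank ℝ V := Submodule.finrank_le _
      rw [hw'coe] at hfle
      have hfle2 : finrank ℝ (fixedSpace (w : V ≃ₗᵢ[ℝ] V)) ≤ finrank ℝ V := Submodule.finrank_le _
      have hn' : finrank ℝ V - finrank ℝ (fixedSpace (w' : V ≃ₗᵢ[ℝ] V)) < n := by
        rw [hw'coe]
        omega
      have h1 := ih _ hn' w' rfl
      obtain ⟨l, hlen, hlrefl, hlprod⟩ := Nat.sInf_mem (refLen_set_nonempty hW w')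
      have htsq : (⟨t, htW⟩ : W) * (⟨t, htW⟩ : W) = 1 := by
        apply Subtype.ext
        exact refl_sq hα0 ht
      have hmemw : l.length + 1 ∈ {k | ∃ l : List W, l.length = k ∧
          (∀ t ∈ l, IsReflection (t : W).1) ∧ l.prod = w} := by
        refine ⟨⟨t, htW⟩ :: l, by simp, ?_, ?_⟩
        · intro s hs
          rcases List.mem_cons.mp hs with rfl | hs
          · exact ⟨α, hα0, ht⟩
          · exact hlrefl s hs
        · rw [List.prod_cons, hlprod, hw', ← mul_assoc, htsq, one_mul]
      calc refLen W w ≤ l.length + 1 := Nat.sInf_le hmemw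
        _ = refLen W w' + 1 := by rw [hlen]; rfl
        _ ≤ (finrank ℝ V - finrank ℝ (fixedSpace (w' : V ≃ₗᵢ[ℝ] V))) + 1 := by
            have := h1; omega
        _ ≤ n := by omega

end Final

end RefLenAux

/-- For any `w` in a finite real reflection group `W` acting on `V`,
`l_T(w) = dim V - dim F(w)`. -/
theorem statement3 {V : Type*} [NormedAddCommGroup V] [InnerProductSpace ℝ V]
    [FiniteDimensional ℝ V]
    (W : Subgroup (V ≃ₗᵢ[ℝ] V)) (hW : IsReflectionGroup W) (w : W) :
    refLen W w = Module.finrank ℝ V - Module.finrank ℝ (fixedSpace (w : W).1) := by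
  apply le_antisymm
  · exact RefLenAux.refLen_le hW w
  · obtain ⟨l, hlen, hlrefl, hlprod⟩ := Nat.sInf_mem (RefLenAux.refLen_set_nonempty hW w)
    have hcoe : ((l.map (fun t : W => (t : V ≃ₗᵢ[ℝ] V))).prod) = (w : V ≃ₗᵢ[ℝ] V) := by
      rw [← hlprod]
      simp
    have hlb := RefLenAux.lower_bound (l.map (fun t : W => (t : V ≃ₗᵢ[ℝ] V))) (by
      intro t ht
      rw [List.mem_map] at ht
      obtain ⟨t', ht', rfl⟩ := ht
      exact hlrefl t' ht')
    rw [hcoe, List.length_map] at hlb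
    have hrl : l.length = refLen W w := hlen
    omega
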